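/- Let n > k and suppose the n×k real matrix-valued map a is given near x₀ ∈ ℝ^{n-k+1} with a(x₀) of the special form: the first column is zero and every other column has its first n-k+1 entries zero with the lower-right (k-1)×(k-1) block of full rank. If the (n-k+1)×(n-k+1) Jacobian matrix ∂(a₁¹,…,a₁^{n-k+1})/∂(x₁,…,x_{n-k+1}) at x₀ is invertible, then x₀ is an isolated point of the set {x : corank a(x) ≥ 1} (i.e., there is a neighborhood of x₀ in which a(x) has rank k for all x ≠ x₀). -/

import Mathlib

attribute [local instance] Matrix.normedAddCommGroup Matrix.normedSpace

open Matrix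

private lemma contDiff_fprod {E : Type*} [NormedAddCommGroup E] [NormedSpace ℝ E]
    {ι : Type*} (s : Finset ι) (f : ι → E → ℝ) (h : ∀ i ∈ s, ContDiff ℝ 1 (f i)) :
    ContDiff ℝ 1 (fun x => ∏ i ∈ s, f i x) := by
  classical
  induction s using Finset.induction with
  | empty => simpa using contDiff_const
  | @insert a s ha ih =>
      simp_rw [Finset.prod_insert ha]
      exact (h _ (Finset.mem_insert_self _ _)).mul
        (ih fun i hi => h i (Finset.mem_insert_of_mem hi))

private lemma contDiff_det' {E : Type*} [NormedAddCommGroup E] [NormedSpace ℝ E] {p : ℕ}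
    {A : E → Matrix (Fin p) (Fin p) ℝ} (hA : ∀ i j, ContDiff ℝ 1 fun x => A x i j) :
    ContDiff ℝ 1 fun x => (A x).det := by
  simp_rw [Matrix.det_apply, Units.smul_def, zsmul_eq_mul]
  exact ContDiff.sum fun σ _ => contDiff_const.mul
    (contDiff_fprod _ _ fun i _ => hA _ _)

private lemma contDiff_adj' {E : Type*} [NormedAddCommGroup E] [NormedSpace ℝ E] {p : ℕ}
    {A : E → Matrix (Fin p) (Fin p) ℝ} (hA : ∀ i j, ContDiff ℝ 1 fun x => A x i j)
    (i j : Fin p) : ContDiff ℝ 1 fun x => (A x).adjugate i j := by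
  simp_rw [Matrix.adjugate_apply]
  refine contDiff_det' fun r s => ?_
  rcases eq_or_ne r j with h | h
  · simp only [Matrix.updateRow_apply, h, if_pos rfl]
    exact contDiff_const
  · simp only [Matrix.updateRow_apply, h, if_neg h]
    exact hA _ _

private lemma aux_key {m p : ℕ}
    (f : (Fin m → ℝ) → Fin m → ℝ)
    (T : (Fin m → ℝ) → Matrix (Fin m) (Fin p) ℝ)
    (b : (Fin m → ℝ) → Fin p → ℝ)
    (B : (Fin m → ℝ) → Matrix (Fin p) (Fin p) ℝ)
    (hf : ContDiff ℝ 1 f)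
    (hT : ∀ j i, ContDiff ℝ 1 fun x => T x j i)
    (hb : ∀ i, ContDiff ℝ 1 fun x => b x i)
    (hB : ∀ r i, ContDiff ℝ 1 fun x => B x r i)
    (x₀ : Fin m → ℝ) (hf0 : f x₀ = 0) (hT0 : T x₀ = 0) (hb0 : b x₀ = 0)
    (hB0 : (B x₀).det ≠ 0)
    (hjac : Function.Bijective (fderiv ℝ f x₀)) :
    ∃ ε > 0, ∀ x, ‖x - x₀‖ < ε → x ≠ x₀ →
      (B x).det ≠ 0 ∧ f x - T x *ᵥ ((B x)⁻¹ *ᵥ b x) ≠ 0 := by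
  classical
  set L := fderiv ℝ f x₀ with hL_def
  let eL : (Fin m → ℝ) ≃L[ℝ] (Fin m → ℝ) :=
    (LinearEquiv.ofBijective (L : (Fin m → ℝ) →ₗ[ℝ] (Fin m → ℝ)) hjac).toContinuousLinearEquiv
  have heL : (eL : (Fin m → ℝ) →L[ℝ] (Fin m → ℝ)) = L := by ext v; rfl
  set d : (Fin m → ℝ) → ℝ := fun x => (B x).det with hd_def
  have hd : ContDiff ℝ 1 d := contDiff_det' hB
  set u : (Fin m → ℝ) → Fin p → ℝ := fun x i => ∑ r, (B x).adjugate i r * b x r with hu_def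
  have hu : ∀ i, ContDiff ℝ 1 fun x => u x i := fun i =>
    ContDiff.sum fun r _ => (contDiff_adj' hB i r).mul (hb r)
  have hu0 : ∀ i, u x₀ i = 0 := by intro i; simp [hu_def, hb0]
  set q : (Fin m → ℝ) → Fin m → ℝ := fun x j => ∑ i, T x j i * u x i with hq_def
  have hq : ∀ j, ContDiff ℝ 1 fun x => q x j := fun j =>
    ContDiff.sum fun i _ => (hT j i).mul (hu i)
  have hq0 : ∀ j, q x₀ j = 0 := by intro j; simp [hq_def, hT0]
  set g : (Fin m → ℝ) → Fin m → ℝ := fun x j => f x j - (d x)⁻¹ * q x j with hg_def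
  have hg : ContDiffAt ℝ 1 g x₀ := by
    apply contDiffAt_pi.2
    intro j
    exact ((contDiff_pi.1 hf j).contDiffAt).sub
      ((hd.contDiffAt.inv hB0).mul (hq j).contDiffAt)
  have hgd' : HasFDerivAt g L x₀ := by
    have hfd : HasFDerivAt f L x₀ := (hf.differentiable one_ne_zero x₀).hasFDerivAt
    refine hasFDerivAt_pi'' fun j => ?_
    have h1 : HasFDerivAt (fun x => f x j)
        ((ContinuousLinearMap.proj (R := ℝ) (φ := fun _ : Fin m => ℝ) j).comp L) x₀ :=
      (hasFDerivAt_pi' (𝕜 := ℝ) (Φ := f) (Φ' := L) (x := x₀)).1 hfd j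
    have h2 : HasFDerivAt (fun x => (d x)⁻¹ * q x j) (0 : (Fin m → ℝ) →L[ℝ] ℝ) x₀ := by
      have hqd : HasFDerivAt (fun x => q x j) (0 : (Fin m → ℝ) →L[ℝ] ℝ) x₀ := by
        have hterm : ∀ i : Fin p,
            HasFDerivAt (fun x => T x j i * u x i) (0 : (Fin m → ℝ) →L[ℝ] ℝ) x₀ := by
          intro i
          have hTd := ((hT j i).differentiable one_ne_zero x₀).hasFDerivAt
          have hud := ((hu i).differentiable one_ne_zero x₀).hasFDerivAt
          have hm := hTd.fun_mul hud
          have e1 : T x₀ j i = 0 := by rw [hT0]; rfl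
          simpa [e1, hu0 i] using hm
        have hsum := HasFDerivAt.fun_sum (fun i (_ : i ∈ Finset.univ) => hterm i)
        simpa using hsum
      have hdd := (((hd.differentiable one_ne_zero x₀).inv hB0)).hasFDerivAt
      have hm2 := hdd.fun_mul hqd
      simpa [hq0 j] using hm2
    simpa using h1.fun_sub h2
  have hgd : HasFDerivAt g ((eL : (Fin m → ℝ) →L[ℝ] (Fin m → ℝ))) x₀ := heL.symm ▸ hgd'
  set PH := hg.toOpenPartialHomeomorph g hgd one_ne_zero with hPH_def
  have hx₀mem : x₀ ∈ PH.source := hg.mem_toOpenPartialHomeomorph_source hgd one_ne_zero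
  have hVopen : IsOpen {x : Fin m → ℝ | d x ≠ 0} :=
    isOpen_compl_singleton.preimage (hd.continuous)
  have hnhds : PH.source ∩ {x | d x ≠ 0} ∈ nhds x₀ :=
    (PH.open_source.inter hVopen).mem_nhds ⟨hx₀mem, hB0⟩
  obtain ⟨ε, εpos, hball⟩ := Metric.mem_nhds_iff.1 hnhds
  refine ⟨ε, εpos, fun x hx hne => ?_⟩
  have hxmem : x ∈ PH.source ∩ {x | d x ≠ 0} := by
    apply hball
    simpa [Metric.mem_ball, dist_eq_norm] using hx
  have hdx : d x ≠ 0 := hxmem.2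
  refine ⟨hdx, ?_⟩
  have hcoe : ⇑PH = g := rfl
  have hgne : g x ≠ g x₀ := by
    intro h
    exact hne (PH.injOn hxmem.1 hx₀mem h)
  have hg0 : g x₀ = 0 := by
    funext j
    simp [hg_def, hq0 j, hf0]
  have hrepr : f x - T x *ᵥ ((B x)⁻¹ *ᵥ b x) = g x := by
    have hinv : (B x)⁻¹ *ᵥ b x = fun i => (d x)⁻¹ * u x i := by
      funext i
      rw [Matrix.inv_def, Ring.inverse_eq_inv, Matrix.smul_mulVec]
      show (d x)⁻¹ * ((B x).adjugate *ᵥ b x) i = (d x)⁻¹ * u x i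
      congr 1
    funext j
    rw [hinv]
    simp only [hg_def, Pi.sub_apply]
    congr 1
    show ∑ i, T x j i * ((d x)⁻¹ * u x i) = (d x)⁻¹ * q x j
    rw [hq_def, Finset.mul_sum]
    exact Finset.sum_congr rfl fun i _ => by ring
  rw [hrepr]
  rw [hg0] at hgne
  exact hgne

set_option maxHeartbeats 1000000 in
/-- If `a(x₀)` has zero first column, the other columns have zero first `n-k+1` entries
with invertible lower-right `(k-1) × (k-1)` block, and the Jacobian of the first
`n-k+1` entries of the first column is invertible at `x₀`, then `x₀` is an isolated
point of `{x : corank a(x) ≥ 1}`. -/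
theorem stmt_12 (n k : ℕ) (hk : 1 ≤ k) (hkn : k < n)
    (a : (Fin (n - k + 1) → ℝ) → Matrix (Fin n) (Fin k) ℝ)
    (ha : ContDiff ℝ 1 a)
    (x₀ : Fin (n - k + 1) → ℝ)
    (hcol1 : ∀ j : Fin n, a x₀ j ⟨0, hk⟩ = 0)
    (htop : ∀ (i : Fin (k - 1)) (j : Fin (n - k + 1)),
      a x₀ ⟨j, by have := j.2; omega⟩ ⟨i + 1, by have := i.2; omega⟩ = 0)
    (hD : IsUnit (Matrix.det (fun (r i : Fin (k - 1)) =>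
      a x₀ ⟨n - k + 1 + r, by have := r.2; omega⟩ ⟨i + 1, by have := i.2; omega⟩)))
    (hjac : Function.Bijective
      (fderiv ℝ (fun x => fun j : Fin (n - k + 1) =>
        a x ⟨j, by have := j.2; omega⟩ ⟨0, hk⟩) x₀)) :
    ∃ ε > 0, ∀ x : Fin (n - k + 1) → ℝ, ‖x - x₀‖ < ε → x ≠ x₀ → (a x).rank = k := by
  obtain ⟨p, rfl⟩ : ∃ p, k = p + 1 := ⟨k - 1, (Nat.succ_pred_eq_of_pos hk).symm⟩
  have hrow1 : ∀ j : Fin (n - (p + 1) + 1), (j : ℕ) < n := fun j => by have := j.2; omega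
  have hrow2 : ∀ r : Fin p, n - (p + 1) + 1 + (r : ℕ) < n := fun r => by have := r.2; omega
  have hcolb : ∀ i : Fin p, (i : ℕ) + 1 < p + 1 := fun i => by have := i.2; omega
  set f : (Fin (n - (p + 1) + 1) → ℝ) → Fin (n - (p + 1) + 1) → ℝ :=
    fun x => fun j => a x ⟨j, hrow1 j⟩ ⟨0, hk⟩ with hf_def
  set T : (Fin (n - (p + 1) + 1) → ℝ) → Matrix (Fin (n - (p + 1) + 1)) (Fin p) ℝ :=
    fun x => Matrix.of fun j i => a x ⟨j, hrow1 j⟩ ⟨(i : ℕ) + 1, hcolb i⟩ with hT_def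
  set b : (Fin (n - (p + 1) + 1) → ℝ) → Fin p → ℝ :=
    fun x r => a x ⟨n - (p + 1) + 1 + r, hrow2 r⟩ ⟨0, hk⟩ with hb_def
  set B : (Fin (n - (p + 1) + 1) → ℝ) → Matrix (Fin p) (Fin p) ℝ :=
    fun x => Matrix.of fun r i => a x ⟨n - (p + 1) + 1 + r, hrow2 r⟩ ⟨(i : ℕ) + 1, hcolb i⟩ with hB_def
  have hent : ∀ (j : Fin n) (i : Fin (p + 1)), ContDiff ℝ 1 fun x => a x j i :=
    fun j i => contDiff_pi.1 (contDiff_pi.1 ha j) i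
  have hf : ContDiff ℝ 1 f := contDiff_pi.2 fun j => hent _ _
  have hT' : ∀ j i, ContDiff ℝ 1 fun x => T x j i := fun j i => hent _ _
  have hb' : ∀ i, ContDiff ℝ 1 fun x => b x i := fun i => hent _ _
  have hB' : ∀ r i, ContDiff ℝ 1 fun x => B x r i := fun r i => hent _ _
  have hf0 : f x₀ = 0 := funext fun j => hcol1 _
  have hT0 : T x₀ = 0 := by
    ext j i
    exact htop i j
  have hb0 : b x₀ = 0 := funext fun r => hcol1 _
  have hB0 : (B x₀).det ≠ 0 := hD.ne_zero
  have hjac' : Function.Bijective (fderiv ℝ f x₀) := hjac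
  obtain ⟨ε, εpos, hε⟩ := aux_key f T b B hf hT' hb' hB' x₀ hf0 hT0 hb0 hB0 hjac'
  refine ⟨ε, εpos, fun x hx hne => ?_⟩
  obtain ⟨hdet, hgne⟩ := hε x hx hne
  have hdet' : IsUnit (B x).det := isUnit_iff_ne_zero.2 hdet
  -- injectivity of mulVecLin
  have hinj : Function.Injective (Matrix.mulVecLin (a x)) := by
    rw [← LinearMap.ker_eq_bot]
    rw [LinearMap.ker_eq_bot']
    intro c hc
    have hrow : ∀ jr : Fin n,
        a x jr 0 * c 0 + ∑ i : Fin p, a x jr i.succ * c i.succ = 0 := by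
      intro jr
      have h0 : (∑ i : Fin (p + 1), a x jr i * c i) = 0 := congrFun hc jr
      rwa [Fin.sum_univ_succ] at h0
    set c' : Fin p → ℝ := fun i => c i.succ with hc'_def
    have hkey : B x *ᵥ c' = -(c 0 • b x) := by
      funext r
      have h1 := hrow ⟨n - (p + 1) + 1 + r, hrow2 r⟩
      show ∑ i : Fin p, a x ⟨n - (p + 1) + 1 + r, hrow2 r⟩ i.succ * c i.succ
          = -(c 0 * a x ⟨n - (p + 1) + 1 + r, hrow2 r⟩ 0)
      linarith [h1]
    have hc'eq : c' = -(c 0 • ((B x)⁻¹ *ᵥ b x)) := by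
      have h1 : (B x)⁻¹ *ᵥ (B x *ᵥ c') = c' := by
        rw [Matrix.mulVec_mulVec, Matrix.nonsing_inv_mul _ hdet', Matrix.one_mulVec]
      rw [← h1, hkey]
      simp [Matrix.mulVec_neg, Matrix.mulVec_smul]
    have htopv : c 0 • f x + T x *ᵥ c' = 0 := by
      funext j
      have h1 := hrow ⟨j, hrow1 j⟩
      show c 0 * a x ⟨j, hrow1 j⟩ 0
          + ∑ i : Fin p, a x ⟨j, hrow1 j⟩ i.succ * c i.succ = 0
      linarith [h1]
    have h2 : T x *ᵥ c' = -(c 0 • (T x *ᵥ ((B x)⁻¹ *ᵥ b x))) := by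
      rw [hc'eq]
      simp [Matrix.mulVec_neg, Matrix.mulVec_smul]
    have h3 : c 0 • f x = c 0 • (T x *ᵥ ((B x)⁻¹ *ᵥ b x)) := by
      rw [h2] at htopv
      rwa [add_neg_eq_zero] at htopv
    have hfinal : c 0 • (f x - T x *ᵥ ((B x)⁻¹ *ᵥ b x)) = 0 := by
      rw [smul_sub, h3, sub_self]
    have hc0 : c 0 = 0 := by
      rcases smul_eq_zero.1 hfinal with h | h
      · exact h
      · exact absurd h hgne
    have hc'0 : c' = 0 := by
      rw [hc'eq, hc0]
      simp
    funext i
    induction i using Fin.cases with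
    | zero => simpa using hc0
    | succ i => simpa using congrFun hc'0 i
  rw [show (a x).rank = Module.finrank ℝ (LinearMap.range (Matrix.mulVecLin (a x))) from rfl,
    LinearMap.finrank_range_of_inj hinj, Module.finrank_fin_fun]
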